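/- Abel inversion of the counting function: for every real v > 0, (1/π)·∫₀^v log(√E/π) / (√E·√(v−E)) dE = log(√v/(2π)). -/

import Mathlib

open Real MeasureTheory Set intervalIntegral

lemma intInt_log01 : IntervalIntegrable Real.log volume 0 1 := by
  have key : IntervalIntegrable (fun x => -Real.log x) volume 0 1 := by
    refine intervalIntegral.intervalIntegrable_deriv_of_nonneg
      (g := fun x => x - x * Real.log x) ?_ ?_ ?_
    · exact (continuous_id.sub Real.continuous_mul_log).continuousOn
    · intro x hx
      simp only [min_eq_left zero_le_one, max_eq_right zero_le_one] at hx
      have := (hasDerivAt_id x).sub (Real.hasDerivAt_mul_log (ne_of_gt hx.1))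
      refine this.congr_deriv ?_
      ring
    · intro x hx
      simp only [min_eq_left zero_le_one, max_eq_right zero_le_one] at hx
      simpa using Real.log_nonpos hx.1.le hx.2.le
  have := key.neg
  convert this using 1
  funext x
  simp

lemma intInt_log0b {b : ℝ} (hb : 0 < b) : IntervalIntegrable Real.log volume 0 b := by
  rcases le_total b 1 with h | h
  · exact intInt_log01.mono_set
      (by rw [Set.uIcc_of_le hb.le, Set.uIcc_of_le zero_le_one]
          exact Set.Icc_subset_Icc le_rfl h)
  · exact intInt_log01.trans
      (intervalIntegrable_log (by rw [Set.uIcc_of_le h]; intro h0; linarith [h0.1]))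

lemma intInt_log_sin : IntervalIntegrable (fun x => Real.log (Real.sin x)) volume 0 (π/2) := by
  have hpi : (0:ℝ) < π/2 := by positivity
  rw [intervalIntegrable_iff_integrableOn_Ioo_of_le hpi.le]
  have hbound : IntegrableOn (fun x => Real.log π - Real.log x) (Set.Ioo 0 (π/2)) := by
    have h1 : IntervalIntegrable (fun x => Real.log π - Real.log x) volume 0 (π/2) :=
      (_root_.intervalIntegrable_const).sub (intInt_log0b hpi)
    rw [intervalIntegrable_iff_integrableOn_Ioo_of_le hpi.le] at h1
    exact h1
  refine hbound.mono' ?_ ?_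
  · exact ((Real.measurable_log.comp Real.continuous_sin.measurable).aestronglyMeasurable)
  · refine (ae_restrict_iff' measurableSet_Ioo).2 (.of_forall fun x hx => ?_)
    have hx0 : 0 < x := hx.1
    have hx2 : x ≤ π/2 := hx.2.le
    have hsin : 2/π * x ≤ Real.sin x := Real.mul_le_sin hx0.le hx2
    have hsinpos : 0 < Real.sin x := lt_of_lt_of_le (by positivity) hsin
    have hle : Real.log (Real.sin x) ≤ 0 :=
      Real.log_nonpos hsinpos.le (Real.sin_le_one x)
    have hge : Real.log x - Real.log π ≤ Real.log (Real.sin x) := by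
      have h1 := Real.log_le_log (by positivity) hsin
      have hlog : Real.log (2/π * x) = Real.log 2 - Real.log π + Real.log x := by
        rw [Real.log_mul (by positivity) hx0.ne', Real.log_div (by norm_num) (by positivity)]
      nlinarith [Real.log_nonneg (by norm_num : (1:ℝ) ≤ 2)]
    rw [Real.norm_eq_abs, abs_of_nonpos hle]
    linarith

lemma intInt_log_sin' : IntervalIntegrable (fun x => Real.log (Real.sin x)) volume (π/2) π := by
  have h := (intInt_log_sin.comp_sub_left π)
  have he : (fun x => Real.log (Real.sin (π - x))) = fun x => Real.log (Real.sin x) := by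
    funext x; rw [Real.sin_pi_sub]
  rw [he] at h
  have : π - π/2 = π/2 := by ring
  rw [this, sub_zero] at h
  exact h.symm

lemma integral_log_sin_main :
    ∫ x in (0:ℝ)..(π/2), Real.log (Real.sin x) = -(π/2) * Real.log 2 := by
  set I := ∫ x in (0:ℝ)..(π/2), Real.log (Real.sin x) with hI
  -- reflection: ∫_{π/2}^π log sin = I
  have href : ∫ x in (π/2:ℝ)..π, Real.log (Real.sin x) = I := by
    have h := intervalIntegral.integral_comp_sub_left
      (a := 0) (b := π/2) (fun x => Real.log (Real.sin x)) π
    simp only [Real.sin_pi_sub] at h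
    rw [sub_zero] at h
    rw [show π/2 = π - π/2 by ring]
    rw [← h]
  -- ∫_0^π log sin = 2 I
  have hfull : ∫ x in (0:ℝ)..π, Real.log (Real.sin x) = 2 * I := by
    rw [← intervalIntegral.integral_add_adjacent_intervals
      intInt_log_sin intInt_log_sin', href]
    ring
  -- doubling: ∫_0^{π/2} log sin (2x) = I
  have hdouble : ∫ x in (0:ℝ)..(π/2), Real.log (Real.sin (2*x)) = I := by
    have h := intervalIntegral.integral_comp_mul_left
      (a := 0) (b := π/2) (fun x => Real.log (Real.sin x)) (c := 2) two_ne_zero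
    simp only [mul_zero] at h
    rw [show (2:ℝ) * (π/2) = π by ring] at h
    rw [h, hfull]
    simp
  -- cosine integral equals I
  have hcos : ∫ x in (0:ℝ)..(π/2), Real.log (Real.cos x) = I := by
    have h := intervalIntegral.integral_comp_sub_left
      (a := 0) (b := π/2) (fun x => Real.log (Real.sin x)) (π/2)
    simp only [Real.sin_pi_div_two_sub] at h
    rw [sub_zero, sub_self] at h
    rw [h]
  have hcosInt : IntervalIntegrable (fun x => Real.log (Real.cos x)) volume 0 (π/2) := by
    have h := intInt_log_sin.comp_sub_left (π/2)
    have he : (fun x => Real.log (Real.sin (π/2 - x))) = fun x => Real.log (Real.cos x) := by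
      funext x; rw [Real.sin_pi_div_two_sub]
    rw [he, sub_zero, sub_self] at h
    exact h.symm
  -- key identity
  have hkey : ∫ x in (0:ℝ)..(π/2), Real.log (Real.sin (2*x)) =
      (π/2) * Real.log 2 + I + I := by
    have hae : ∀ᵐ (x : ℝ), x ∈ Set.uIoc (0:ℝ) (π/2) →
        Real.log (Real.sin (2*x)) =
          Real.log 2 + Real.log (Real.sin x) + Real.log (Real.cos x) := by
      have h0 : ∀ᵐ (x : ℝ), x ≠ π/2 := by
        rw [MeasureTheory.ae_iff]
        have : {a : ℝ | ¬ a ≠ π/2} = {π/2} := by ext a; simp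
        rw [this]
        exact Real.volume_singleton
      filter_upwards [h0] with x hx hmem
      rw [Set.uIoc_of_le (by positivity : (0:ℝ) ≤ π/2)] at hmem
      have hx1 : 0 < x := hmem.1
      have hx2 : x < π/2 := lt_of_le_of_ne hmem.2 hx
      have hs : 0 < Real.sin x := Real.sin_pos_of_pos_of_lt_pi hx1 (by linarith [Real.pi_pos])
      have hc : 0 < Real.cos x := Real.cos_pos_of_mem_Ioo ⟨by linarith [Real.pi_pos], hx2⟩
      rw [Real.sin_two_mul, Real.log_mul (by positivity) hc.ne',
        Real.log_mul (by norm_num) hs.ne']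
    rw [intervalIntegral.integral_congr_ae hae]
    rw [intervalIntegral.integral_add ((_root_.intervalIntegrable_const).add intInt_log_sin) hcosInt,
        intervalIntegral.integral_add (_root_.intervalIntegrable_const) intInt_log_sin,
        intervalIntegral.integral_const, hcos]
    simp only [smul_eq_mul, sub_zero]
    rfl
  rw [hdouble] at hkey
  linarith


/-- Abel inversion of the counting function:
`(1/π) ∫₀^v log(√E/π)/(√E √(v−E)) dE = log(√v/(2π))` for `v > 0`. -/
theorem abel_inversion_width (v : ℝ) (hv : 0 < v) :
    (1 / Real.pi) * ∫ E in (0:ℝ)..v,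
        Real.log (Real.sqrt E / Real.pi) / (Real.sqrt E * Real.sqrt (v - E)) =
      Real.log (Real.sqrt v / (2 * Real.pi)) := by
  have hpi : (0:ℝ) < π := Real.pi_pos
  have hpi2 : (0:ℝ) < π/2 := by positivity
  set g : ℝ → ℝ := fun E =>
    Real.log (Real.sqrt E / π) / (Real.sqrt E * Real.sqrt (v - E)) with hg
  set f : ℝ → ℝ := fun x => v * Real.sin x ^ 2 with hf
  set f' : ℝ → ℝ := fun x => v * (2 * Real.sin x ^ 1 * Real.cos x) with hf'
  -- derivative
  have hderiv : ∀ x ∈ Set.Ioo (0:ℝ) (π/2), HasDerivWithinAt f (f' x) (Set.Ioo (0:ℝ) (π/2)) x := by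
    intro x _
    exact (((Real.hasDerivAt_sin x).pow 2).const_mul v).hasDerivWithinAt
  -- injectivity
  have hinj : Set.InjOn f (Set.Ioo (0:ℝ) (π/2)) := by
    intro x hx y hy hxy
    have hsx : 0 ≤ Real.sin x := Real.sin_nonneg_of_nonneg_of_le_pi hx.1.le
      (by linarith [hx.2])
    have hsy : 0 ≤ Real.sin y := Real.sin_nonneg_of_nonneg_of_le_pi hy.1.le
      (by linarith [hy.2])
    have h2 : Real.sin x ^ 2 = Real.sin y ^ 2 := by
      have := mul_left_cancel₀ hv.ne' hxy
      exact this
    have h3 : Real.sin x = Real.sin y := by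
      nlinarith
    exact Real.injOn_sin ⟨by linarith [hx.1], hx.2.le⟩ ⟨by linarith [hy.1], hy.2.le⟩ h3
  -- image
  have himg : f '' Set.Ioo (0:ℝ) (π/2) = Set.Ioo 0 v := by
    ext E
    constructor
    · rintro ⟨x, hx, rfl⟩
      have hs : 0 < Real.sin x := Real.sin_pos_of_pos_of_lt_pi hx.1 (by linarith [hx.2])
      have hs1 : Real.sin x < 1 := by
        have := Real.strictMonoOn_sin
          ⟨by linarith [hx.1], hx.2.le⟩ (Set.mem_Icc.2 ⟨by linarith, le_rfl⟩) hx.2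
        simpa using this
      rw [hf]
      constructor
      · positivity
      · simp only
        have hsq : Real.sin x ^ 2 < 1 := by nlinarith
        nlinarith [mul_lt_mul_of_pos_left hsq hv]
    · rintro ⟨hE1, hE2⟩
      refine ⟨Real.arcsin (Real.sqrt (E / v)), ⟨?_, ?_⟩, ?_⟩
      · exact Real.arcsin_pos.2 (Real.sqrt_pos.2 (div_pos hE1 hv))
      · refine Real.arcsin_lt_pi_div_two.2 ?_
        rw [show (1:ℝ) = Real.sqrt 1 by simp]
        exact Real.sqrt_lt_sqrt (div_nonneg hE1.le hv.le) (by rw [div_lt_one hv]; exact hE2)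
      · have h01 : Real.sqrt (E / v) ≤ 1 := by
          rw [show (1:ℝ) = Real.sqrt 1 by simp]
          exact Real.sqrt_le_sqrt (by rw [div_le_one hv]; exact hE2.le)
        rw [hf]
        simp only
        rw [Real.sin_arcsin (le_trans (by norm_num) (Real.sqrt_nonneg _)) h01,
          Real.sq_sqrt (div_nonneg hE1.le hv.le)]
        field_simp
  -- substitution
  have hsub : ∫ E in Set.Ioo (0:ℝ) v, g E
      = ∫ x in Set.Ioo (0:ℝ) (π/2), |f' x| • g (f x) := by
    rw [← himg]
    exact MeasureTheory.integral_image_eq_integral_abs_deriv_smul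
      measurableSet_Ioo hderiv hinj g
  -- simplify integrand on the open interval
  have hcongr : ∫ x in Set.Ioo (0:ℝ) (π/2), |f' x| • g (f x)
      = ∫ x in Set.Ioo (0:ℝ) (π/2),
          (2 * (Real.log (Real.sin x) + (Real.log (Real.sqrt v) - Real.log π))) := by
    refine MeasureTheory.setIntegral_congr_fun measurableSet_Ioo fun x hx => ?_
    have hs : 0 < Real.sin x := Real.sin_pos_of_pos_of_lt_pi hx.1 (by linarith [hx.2])
    have hc : 0 < Real.cos x := Real.cos_pos_of_mem_Ioo ⟨by linarith [hx.1], hx.2⟩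
    have hsv : 0 < Real.sqrt v := Real.sqrt_pos.2 hv
    have h1 : Real.sqrt (v * Real.sin x ^ 2) = Real.sqrt v * Real.sin x := by
      rw [Real.sqrt_mul hv.le, Real.sqrt_sq hs.le]
    have h2 : Real.sqrt (v - v * Real.sin x ^ 2) = Real.sqrt v * Real.cos x := by
      have : v - v * Real.sin x ^ 2 = v * Real.cos x ^ 2 := by
        have := Real.sin_sq_add_cos_sq x
        nlinarith
      rw [this, Real.sqrt_mul hv.le, Real.sqrt_sq hc.le]
    have habs : |f' x| = v * (2 * Real.sin x * Real.cos x) := by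
      rw [hf']
      simp only [pow_one]
      rw [abs_of_pos (by positivity)]
    have hlog : Real.log (Real.sqrt v * Real.sin x / π)
        = Real.log (Real.sin x) + (Real.log (Real.sqrt v) - Real.log π) := by
      rw [Real.log_div (by positivity) hpi.ne', Real.log_mul hsv.ne' hs.ne']
      ring
    rw [smul_eq_mul, habs, hg, hf]
    simp only
    rw [h1, h2, hlog]
    have hvv : Real.sqrt v * Real.sqrt v = v := Real.mul_self_sqrt hv.le
    field_simp
    linear_combination (-(
      (Real.log (Real.sin x) + (Real.log (Real.sqrt v) - Real.log π)))) * hvv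
  have hIoo : (∫ E in (0:ℝ)..v,
      Real.log (Real.sqrt E / Real.pi) / (Real.sqrt E * Real.sqrt (v - E)))
      = ∫ E in Set.Ioo (0:ℝ) v, g E := by
    rw [intervalIntegral.integral_of_le hv.le, MeasureTheory.integral_Ioc_eq_integral_Ioo]
  have hback : ∫ x in Set.Ioo (0:ℝ) (π/2),
      (2 * (Real.log (Real.sin x) + (Real.log (Real.sqrt v) - Real.log π)))
      = ∫ x in (0:ℝ)..(π/2),
        (2 * (Real.log (Real.sin x) + (Real.log (Real.sqrt v) - Real.log π))) := by
    rw [intervalIntegral.integral_of_le hpi2.le, MeasureTheory.integral_Ioc_eq_integral_Ioo]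
  have hval : ∫ x in (0:ℝ)..(π/2),
      (2 * (Real.log (Real.sin x) + (Real.log (Real.sqrt v) - Real.log π)))
      = 2 * (-(π/2) * Real.log 2 + (π/2) * (Real.log (Real.sqrt v) - Real.log π)) := by
    rw [intervalIntegral.integral_const_mul,
      intervalIntegral.integral_add intInt_log_sin _root_.intervalIntegrable_const,
      integral_log_sin_main, intervalIntegral.integral_const]
    simp only [smul_eq_mul, sub_zero]
  rw [hIoo, hsub, hcongr, hback, hval]
  have hsv : (0:ℝ) < Real.sqrt v := Real.sqrt_pos.2 hv
  rw [Real.log_div hsv.ne' (by positivity), Real.log_mul two_ne_zero hpi.ne']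
  field_simp
  ring
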